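/- Let P be the weak (right) order on a Coxeter group W and let G be a group of S-preserving automorphisms of W. Then the injective homomorphism φ : W̃ → W of Steinberg (sending each generator s̃_J of the fixed-subgroup Coxeter system to the longest element w_0(J) of W_J) is an order-isomorphism from the weak order on W̃ onto the subposet of the weak order on W induced by the fixed subgroup W^G. -/

import Mathlib

/-- The right weak order on a Coxeter group: `u ≤ v` iff `v = u·w` with
`ℓ(v) = ℓ(u) + ℓ(w)`. -/
def WeakLE {B W : Type*} [Group W] {M : CoxeterMatrix B}
    (cs : CoxeterSystem M W) (u v : W) : Prop :=
  cs.length u + cs.length (u⁻¹ * v) = cs.length v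

/-- The Steinberg embedding `φ : W̃ → W` of the fixed subgroup `W^G` (sending
each generator of the Coxeter system `(W̃, S̃)` to the longest element of the
finite parabolic subgroup on a `G`-orbit) is an order-isomorphism from the weak
order on `W̃` onto the subposet of the weak order on `W` induced by `W^G`. -/
theorem stmt_9 {B B' W W' G : Type*} [Group W] [Group W'] [Group G]
    {M : CoxeterMatrix B} {M' : CoxeterMatrix B'}
    (cs : CoxeterSystem M W) (cs' : CoxeterSystem M' W')
    (ρ : G →* MulAut W)
    (hρS : ∀ g : G, ∀ i : B, ∃ j : B, ρ g (cs.simple i) = cs.simple j)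
    (φ : W' →* W) (hinj : Function.Injective φ)
    (hrange : Set.range φ = {w : W | ∀ g : G, ρ g w = w})
    (hgen : ∀ b : B', ∃ J : Set B,
      (∀ g : G, ∀ i ∈ J, ∃ j ∈ J, ρ g (cs.simple i) = cs.simple j) ∧
      φ (cs'.simple b) ∈ Subgroup.closure (cs.simple '' J) ∧
      ∀ v ∈ Subgroup.closure (cs.simple '' J),
        cs.length v ≤ cs.length (φ (cs'.simple b)))
    (hCrisp : ∀ ω : List B', cs'.IsReduced ω →
      cs.length (φ (cs'.wordProd ω)) =
        (ω.map fun b => cs.length (φ (cs'.simple b))).sum) :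
    ∀ u v : W', WeakLE cs' u v ↔ WeakLE cs (φ u) (φ v) := by

  -- Notation: `L w = ℓ(φ w)`.
  set L : W' → ℕ := fun w => cs.length (φ w) with hL
  -- Lemma A: length-additivity in `W'` transfers through `φ`.
  have lemA : ∀ x y : W', cs'.length x + cs'.length y = cs'.length (x * y) →
      L x + L y = L (x * y) := by
    intro x y h
    obtain ⟨ωx, hx, rfl⟩ := cs'.exists_reduced_word' x
    obtain ⟨ωy, hy, rfl⟩ := cs'.exists_reduced_word' y
    have hxy : cs'.IsReduced (ωx ++ ωy) := by
      unfold CoxeterSystem.IsReduced at *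
      rw [← cs'.wordProd_append] at h
      rw [← h, hx, hy, List.length_append]
    rw [← cs'.wordProd_append, hL]
    simp only
    rw [hCrisp _ hx, hCrisp _ hy, hCrisp _ hxy, List.map_append, List.sum_append]
  -- Lemma B: images of simple reflections are nontrivial.
  have lemB : ∀ b : B', 1 ≤ L (cs'.simple b) := by
    intro b
    have hb : cs'.simple b ≠ 1 := by
      intro h
      have := cs'.length_simple b
      rw [h, cs'.length_one] at this
      omega
    have hφ : φ (cs'.simple b) ≠ 1 := fun h => hb (hinj (by rw [h, map_one]))
    have h0 : cs.length (φ (cs'.simple b)) ≠ 0 := fun h => hφ (cs.length_eq_zero_iff.mp h)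
    show 1 ≤ cs.length (φ (cs'.simple b))
    omega
  -- Sub-step: `L (s b * y) = L (s b) + L y` forces `ℓ'(s b * y) = ℓ' y + 1`.
  have lemS : ∀ (b : B') (y : W'), L (cs'.simple b) + L y = L (cs'.simple b * y) →
      cs'.length (cs'.simple b * y) = cs'.length y + 1 := by
    intro b y h1
    rcases cs'.length_simple_mul y b with h | h
    · exact h
    · exfalso
      -- then `y = s b * (s b * y)` is length-additive
      have hne := cs'.length_simple_mul_ne y b
      have hadd : cs'.length (cs'.simple b) + cs'.length (cs'.simple b * y)
          = cs'.length (cs'.simple b * (cs'.simple b * y)) := by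
        rw [← mul_assoc, cs'.simple_mul_simple_self, one_mul, cs'.length_simple]
        omega
      have := lemA _ _ hadd
      rw [← mul_assoc, cs'.simple_mul_simple_self, one_mul] at this
      have := lemB b
      omega
  -- Key lemma (reverse direction), by induction on `ℓ' x`.
  have key : ∀ (n : ℕ) (x y : W'), cs'.length x = n → L x + L y = L (x * y) →
      cs'.length x + cs'.length y = cs'.length (x * y) := by
    intro n
    induction n with
    | zero =>
      intro x y hx _
      have : x = 1 := cs'.length_eq_zero_iff.mp hx
      subst this
      simp
    | succ n ih =>
      intro x y hx h
      have hxne : x ≠ 1 := by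
        intro h1; rw [h1, cs'.length_one] at hx; omega
      obtain ⟨i, hi⟩ := cs'.exists_rightDescent_of_ne_one hxne
      unfold CoxeterSystem.IsRightDescent at hi
      set x' := x * cs'.simple i with hx'
      have hxx' : x = x' * cs'.simple i := by
        rw [hx', mul_assoc, cs'.simple_mul_simple_self, mul_one]
      have hlx' : cs'.length x' = n := by
        rcases cs'.length_mul_simple x i with h' | h' <;> rw [← hx'] at h' <;> omega
      -- `L x = L x' + L (s i)`
      have hadd1 : cs'.length x' + cs'.length (cs'.simple i) = cs'.length x := by
        rw [cs'.length_simple]; omega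
      have hLx : L x' + L (cs'.simple i) = L x := by
        have := lemA x' (cs'.simple i) (by rw [← hxx']; exact hadd1)
        rw [← hxx'] at this; exact this
      -- triangle inequalities force equalities
      have t1 : L (cs'.simple i * y) ≤ L (cs'.simple i) + L y := by
        simp only [hL, map_mul]; exact cs.length_mul_le _ _
      have t2 : L (x' * (cs'.simple i * y)) ≤ L x' + L (cs'.simple i * y) := by
        simp only [hL, map_mul]; exact cs.length_mul_le _ _
      have hxy : x * y = x' * (cs'.simple i * y) := by rw [hxx', mul_assoc]
      rw [hxy] at h
      have e1 : L (cs'.simple i) + L y = L (cs'.simple i * y) := by omega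
      have e2 : L x' + L (cs'.simple i * y) = L (x' * (cs'.simple i * y)) := by omega
      have hsy := lemS i y e1
      have := ih x' (cs'.simple i * y) hlx' e2
      rw [hxy]
      rw [cs'.length_simple] at hadd1
      omega
  intro u v
  constructor
  · intro h
    have := lemA u (u⁻¹ * v) (by rw [mul_inv_cancel_left]; exact h)
    rw [mul_inv_cancel_left] at this
    unfold WeakLE
    simpa only [hL, map_mul, map_inv] using this
  · intro h
    have h' : L u + L (u⁻¹ * v) = L (u * (u⁻¹ * v)) := by
      rw [mul_inv_cancel_left]
      simpa only [hL, map_mul, map_inv, WeakLE] using h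
    have := key (cs'.length u) u (u⁻¹ * v) rfl h'
    rw [mul_inv_cancel_left] at this
    exact this
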